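/- Let n ≥ 1 and let m_1, …, m_n be integers with m_i ≥ 2 for all i. If det T(m_1, …, m_n) = det T(m_2, …, m_n) + 1, then m_i = 2 for all i and det T(m_1, …, m_n) = n + 1. (This is Lemma 3.3(5): if Δ(Γ) = Δ(Γ∖{v_1}) + 1, then Δ(Γ) = n + 1.) -/

import Mathlib

/-- The determinant of the `n × n` tridiagonal integer matrix whose diagonal
entries are `m 1, …, m n` (so the `(i,i)` entry, `i : Fin n`, is `m (i+1)`),
whose entries immediately above and below the diagonal are all `-1`, and whose
other entries are `0`.  For `n = 0` this is `1` (determinant of the empty matrix). -/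
def tridiagDet (n : ℕ) (m : ℕ → ℤ) : ℤ :=
  Matrix.det (fun i j : Fin n =>
    if (i : ℕ) = (j : ℕ) then m ((i : ℕ) + 1)
    else if (i : ℕ) + 1 = (j : ℕ) ∨ (j : ℕ) + 1 = (i : ℕ) then -1 else 0)

lemma tridiag_zero (m : ℕ → ℤ) : tridiagDet 0 m = 1 := by
  rw [tridiagDet]; exact Matrix.det_isEmpty

lemma tridiag_one (m : ℕ → ℤ) : tridiagDet 1 m = m 1 := by
  rw [tridiagDet]; exact (Matrix.det_fin_one _).trans (by simp)

/-- Cofactor expansion along the first row (and then the first column of the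
second minor): `Δ(m₁,…,m_{k+2}) = m₁ · Δ(m₂,…,m_{k+2}) − Δ(m₃,…,m_{k+2})`. -/
lemma tridiag_rec (k : ℕ) (m : ℕ → ℤ) :
    tridiagDet (k + 2) m =
      m 1 * tridiagDet (k + 1) (fun i => m (1 + i)) - tridiagDet k (fun i => m (2 + i)) := by
  set M : Matrix (Fin (k+2)) (Fin (k+2)) ℤ := fun i j =>
    if (i : ℕ) = (j : ℕ) then m ((i : ℕ) + 1)
    else if (i : ℕ) + 1 = (j : ℕ) ∨ (j : ℕ) + 1 = (i : ℕ) then -1 else 0 with hM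
  have h1 : tridiagDet (k+2) m = M.det := rfl
  rw [h1, Matrix.det_succ_row_zero]
  rw [Fin.sum_univ_succ, Fin.sum_univ_succ]
  have hz : ∀ j : Fin k, M 0 (j.succ.succ) = 0 := by
    intro j; simp [hM]
  have hrest : (∑ j : Fin k, (-1 : ℤ) ^ ((j.succ.succ : Fin (k+2)) : ℕ) * M 0 j.succ.succ *
      (M.submatrix Fin.succ (j.succ.succ).succAbove).det) = 0 := by
    apply Finset.sum_eq_zero
    intro j _
    rw [hz j]; ring
  rw [hrest]
  have hM00 : M 0 0 = m 1 := by simp [hM]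
  have hM01 : M 0 (1 : Fin (k+2)) = -1 := by simp [hM]
  have hminor0 : (M.submatrix Fin.succ (0 : Fin (k+2)).succAbove).det
      = tridiagDet (k+1) (fun i => m (1 + i)) := by
    rw [Fin.succAbove_zero]
    congr 1
    ext i j
    simp only [Matrix.submatrix_apply]; simp only [hM, Fin.val_succ]
    split_ifs with h1 h2 h3 h4 <;> first | rfl | omega | (congr 1; omega)
  -- second minor
  set N : Matrix (Fin (k+1)) (Fin (k+1)) ℤ := M.submatrix Fin.succ (1 : Fin (k+2)).succAbove
    with hN
  have hN00 : N 0 0 = -1 := by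
    rw [hN, Matrix.submatrix_apply]; simp [hM, Fin.succAbove, Fin.succ]
  have hNz : ∀ i : Fin k, N i.succ 0 = 0 := by
    intro i
    rw [hN, Matrix.submatrix_apply]; simp [hM, Fin.succAbove, Fin.succ]
  have hNdet : N.det = -tridiagDet k (fun i => m (2 + i)) := by
    rw [Matrix.det_succ_column_zero, Fin.sum_univ_succ]
    have hrest2 : (∑ i : Fin k, (-1 : ℤ) ^ ((i.succ : Fin (k+1)) : ℕ) * N i.succ 0 *
        (N.submatrix i.succ.succAbove Fin.succ).det) = 0 := by
      apply Finset.sum_eq_zero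
      intro i _
      rw [hNz i]; ring
    rw [hrest2, hN00]
    have hsub : (N.submatrix (0 : Fin (k+1)).succAbove Fin.succ).det
        = tridiagDet k (fun i => m (2 + i)) := by
      rw [Fin.succAbove_zero]
      congr 1
      ext i j
      simp only [hN, Matrix.submatrix_apply]; simp only [hM, Fin.val_succ, Fin.succAbove, Fin.succ]
      have : ¬ ((⟨(j:ℕ)+1, by omega⟩ : Fin (k+1)).castSucc < 1) := by
        simp [Fin.lt_def]
      rw [if_neg this]
      simp only [Fin.val_mk, Fin.coe_castSucc, Fin.val_succ]
      split_ifs with h1 h2 h3 h4 <;> first | rfl | omega | (congr 1; omega)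
    rw [hsub]
    norm_num
  simp only [Fin.succ_zero_eq_one, Fin.val_zero, Fin.val_one, pow_zero, pow_one]
  rw [hM00, hM01, hminor0, hNdet]
  ring

lemma tridiag_ge (k : ℕ) : ∀ m : ℕ → ℤ, (∀ i, 1 ≤ i → i ≤ k + 1 → 2 ≤ m i) →
    tridiagDet k (fun i => m (1 + i)) + 1 ≤ tridiagDet (k + 1) m ∧
    1 ≤ tridiagDet k (fun i => m (1 + i)) := by
  induction k with
  | zero =>
    intro m hm
    rw [tridiag_one, tridiag_zero]
    exact ⟨by have := hm 1 le_rfl le_rfl; omega, le_rfl⟩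
  | succ k ih =>
    intro m hm
    have hm' : ∀ i, 1 ≤ i → i ≤ k + 1 → 2 ≤ m (1 + i) := fun i h1 h2 => hm (1 + i) (by omega) (by omega)
    obtain ⟨hA, hB⟩ := ih (fun i => m (1 + i)) hm'
    have hrec := tridiag_rec k m
    have hm1 : 2 ≤ m 1 := hm 1 le_rfl (by omega)
    have hshift : (fun i => m (1 + (1 + i))) = (fun i => m (2 + i)) := by
      funext i; congr 1; omega
    rw [hshift] at hA hB
    set A := tridiagDet (k + 1) (fun i => m (1 + i))
    set B := tridiagDet k (fun i => m (2 + i))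
    constructor
    · rw [hrec]; nlinarith
    · linarith

lemma tridiag_eq (k : ℕ) : ∀ m : ℕ → ℤ, (∀ i, 1 ≤ i → i ≤ k + 1 → 2 ≤ m i) →
    tridiagDet (k + 1) m = tridiagDet k (fun i => m (1 + i)) + 1 →
    (∀ i, 1 ≤ i → i ≤ k + 1 → m i = 2) ∧ tridiagDet (k + 1) m = (k : ℤ) + 2 := by
  induction k with
  | zero =>
    intro m hm h
    rw [tridiag_one] at h ⊢
    rw [tridiag_zero] at h
    refine ⟨fun i h1 h2 => ?_, by omega⟩
    have : i = 1 := by omega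
    subst this; omega
  | succ k ih =>
    intro m hm h
    have hm' : ∀ i, 1 ≤ i → i ≤ k + 1 → 2 ≤ m (1 + i) := fun i h1 h2 => hm (1 + i) (by omega) (by omega)
    have hm1 : 2 ≤ m 1 := hm 1 le_rfl (by omega)
    have hrec := tridiag_rec k m
    obtain ⟨hA, hB⟩ := tridiag_ge k (fun i => m (1 + i)) hm'
    have hshift : (fun i => m (1 + (1 + i))) = (fun i => m (2 + i)) := by
      funext i; congr 1; omega
    rw [hshift] at hA hB
    set A := tridiagDet (k + 1) (fun i => m (1 + i)) with hAdef
    set B := tridiagDet k (fun i => m (2 + i)) with hBdef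
    rw [hrec] at h
    have hm1eq : m 1 = 2 := by nlinarith
    have hABeq : A = B + 1 := by nlinarith
    obtain ⟨hall, hval⟩ := ih (fun i => m (1 + i)) hm' (by rw [hshift]; omega)
    refine ⟨fun i h1 h2 => ?_, ?_⟩
    · rcases Nat.eq_or_lt_of_le h1 with h1' | h1'
      · exact h1' ▸ hm1eq
      · have := hall (i - 1) (by omega) (by omega)
        simpa [show 1 + (i - 1) = i by omega] using this
    · rw [hrec, hm1eq]
      rw [← hAdef] at hval
      push_cast
      omega

/-- Lemma 3.3(5): for a chain with weights `m_1, …, m_n`, each `m_i ≥ 2`,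
if `det T(m_1, …, m_n) = det T(m_2, …, m_n) + 1` (i.e. `Δ(Γ) = Δ(Γ∖{v_1}) + 1`),
then all `m_i = 2` and `det T(m_1, …, m_n) = n + 1`. -/
theorem tridiagDet_succ_eq (n : ℕ) (hn : 1 ≤ n) (m : ℕ → ℤ)
    (hm : ∀ i, 1 ≤ i → i ≤ n → 2 ≤ m i)
    (h : tridiagDet n m = tridiagDet (n - 1) (fun i => m (1 + i)) + 1) :
    (∀ i, 1 ≤ i → i ≤ n → m i = 2) ∧ tridiagDet n m = (n : ℤ) + 1 := by
  obtain ⟨k, rfl⟩ : ∃ k, n = k + 1 := ⟨n - 1, by omega⟩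
  simp only [Nat.add_sub_cancel] at h
  obtain ⟨h1, h2⟩ := tridiag_eq k m hm h
  refine ⟨h1, ?_⟩
  rw [h2]
  push_cast
  ring
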